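/- If L: C̄ → C̄[W^{-1}] is an orthogonal localization, then the pullback functor L*: FT(C̄[W^{-1}], P, r_i) → FT(C̄, P, r_i) is fully faithful, exhibiting FT(C̄[W^{-1}], P, r_i) as a full reflective subcategory of FT(C̄, P, r_i); i.e. the counit L_! L* A → A is a natural isomorphism. -/

import Mathlib

universe u v

open CategoryTheory

namespace AQFT

/-! ### Basic combinatorics of lists of colors -/

/-- Concatenation of a finite family of lists of colors. -/
def concat {C : Type u} : {n : ℕ} → (Fin n → List C) → List C
  | 0, _ => []
  | _ + 1, bs => bs 0 ++ concat fun i => bs i.succ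

lemma concat_length {C : Type u} : ∀ {n : ℕ} (bs : Fin n → List C),
    (concat bs).length = ∑ i, (bs i).length
  | 0, bs => by simp [concat]
  | n + 1, bs => by
    simp [concat, List.length_append, concat_length (fun i => bs i.succ), Fin.sum_univ_succ]

/-- The position in `concat bs` at which the `i`-th block starts. -/
def offset {C : Type u} {n : ℕ} (bs : Fin n → List C) (i : ℕ) : ℕ :=
  (((List.ofFn bs).take i).flatten).length

/-- "Dependent flatten": combine families indexed by the blocks into a family
indexed by the concatenation. -/
def dconcat {C : Type u} {P : C → Type v} : {n : ℕ} → (bs : Fin n → List C) →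
    (∀ i, ∀ r : Fin (bs i).length, P ((bs i).get r)) →
    ∀ j : Fin (concat bs).length, P ((concat bs).get j)
  | 0, _, _, j => j.elim0
  | n + 1, bs, h, j =>
    if hj : (j : ℕ) < (bs 0).length then
      have hg : (concat bs).get j = (bs 0).get ⟨j, hj⟩ := by
        simp only [List.get_eq_getElem]
        simp [concat, List.get_eq_getElem, List.getElem_append, hj]
      cast ((congrArg P hg).symm) (h 0 ⟨j, hj⟩)
    else
      have hlt : (j : ℕ) - (bs 0).length < (concat fun i => bs i.succ).length := by
        have := j.isLt
        simp only [concat, List.length_append] at this ⊢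
        omega
      have hg : (concat bs).get j =
          (concat fun i => bs i.succ).get ⟨(j : ℕ) - (bs 0).length, hlt⟩ := by
        simp only [List.get_eq_getElem]
        simp [concat, List.get_eq_getElem, List.getElem_append, hj]
      cast ((congrArg P hg).symm)
        (dconcat (fun i => bs i.succ) (fun i r => h i.succ r) ⟨(j : ℕ) - (bs 0).length, hlt⟩)

/-- A dependent family on a singleton list. -/
def sing {C : Type u} {P : C → Type v} {c : C} (x : P c) :
    ∀ i : Fin ([c].length), P ([c].get i) := fun i =>
  match i with
  | ⟨0, _⟩ => x
  | ⟨_ + 1, h⟩ => absurd h (by simp)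

/-- A dependent family on a two-element list. -/
def pairFam {C : Type u} {P : C → Type v} {c₁ c₂ : C} (x : P c₁) (y : P c₂) :
    ∀ i : Fin ([c₁, c₂].length), P ([c₁, c₂].get i) := fun i =>
  match i with
  | ⟨0, _⟩ => x
  | ⟨1, _⟩ => y
  | ⟨_ + 2, h⟩ => absurd h (by simp)

lemma punitList_eq : ∀ (l l' : List PUnit.{u+1}), l.length = l'.length → l = l'
  | [], [], _ => rfl
  | _ :: l, _ :: l', h => by
    simp only [List.length_cons, Nat.add_right_cancel_iff] at h
    rw [punitList_eq l l' h]
  | [], _ :: _, h => by simp at h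
  | _ :: _, [], h => by simp at h

/-! ### Colored operads in `Type u` ("`Set`") -/

/-- The underlying data of a `C`-colored (symmetric) operad in `Type u`:
operations, operadic units, composition and the symmetric group actions. -/
structure OperadData (C : Type u) : Type (u + 1) where
  Op : List C → C → Type u
  unit : ∀ c : C, Op [c] c
  comp : ∀ {cs : List C} {t : C}, Op cs t →
    ∀ {bs : Fin cs.length → List C},
      (∀ i : Fin cs.length, Op (bs i) (cs.get i)) → Op (concat bs) t
  act : ∀ {cs : List C} {t : C} (σ : Equiv.Perm (Fin cs.length)),
    Op cs t → Op (List.ofFn (fun i => cs.get (σ i))) t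

/-- A `C`-colored operad in `Type u`: data together with unitality,
associativity and a symmetry axiom (stated using `HEq`, since the color lists
of the two sides are only propositionally equal). -/
structure Operad (C : Type u) extends OperadData C : Type (u + 1) where
  comp_unit : ∀ {cs : List C} {t : C} (o : Op cs t),
    HEq (comp o (fun i => unit (cs.get i))) o
  unit_comp : ∀ {cs : List C} {t : C} (o : Op cs t)
    (p : ∀ i : Fin ([t].length), Op cs ([t].get i)),
    (∀ i, HEq (p i) o) → HEq (comp (unit t) p) o
  assoc : ∀ {cs : List C} {t : C} (o : Op cs t)
    {bs : Fin cs.length → List C} (p : ∀ i, Op (bs i) (cs.get i))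
    {ds : Fin (concat bs).length → List C}
    (q : ∀ j, Op (ds j) ((concat bs).get j))
    (e : ∀ (i : Fin cs.length), Fin (bs i).length → Fin (concat bs).length)
    (_ : ∀ i r, ((e i r : ℕ)) = offset bs i + r)
    {ds' : ∀ i : Fin cs.length, Fin (bs i).length → List C}
    (q' : ∀ (i : Fin cs.length) (r : Fin (bs i).length), Op (ds' i r) ((bs i).get r)),
    (∀ i r, HEq (q' i r) (q (e i r))) →
    HEq (comp (comp o p) q) (comp o (fun i => comp (p i) (q' i)))
  act_one : ∀ {cs : List C} {t : C} (o : Op cs t), HEq (act 1 o) o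

/-! ### Algebras over a colored operad (in `Type u`, the category `Set`) -/

/-- An algebra over a colored operad in `Type u`. -/
structure Algebra {C : Type u} (O : Operad C) : Type (u + 1) where
  X : C → Type u
  action : ∀ {cs : List C} {t : C}, O.Op cs t →
    (∀ i : Fin cs.length, X (cs.get i)) → X t
  action_unit : ∀ {c : C} (a : ∀ i : Fin ([c].length), X ([c].get i)),
    action (O.unit c) a = a ⟨0, Nat.one_pos⟩
  action_comp : ∀ {cs : List C} {t : C} (o : O.Op cs t)
    {bs : Fin cs.length → List C} (p : ∀ i, O.Op (bs i) (cs.get i))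
    (as : ∀ j : Fin (concat bs).length, X ((concat bs).get j))
    (e : ∀ (i : Fin cs.length), Fin (bs i).length → Fin (concat bs).length)
    (_ : ∀ i r, ((e i r : ℕ)) = offset bs i + r)
    (as' : ∀ (i : Fin cs.length) (r : Fin (bs i).length), X ((bs i).get r)),
    (∀ i r, HEq (as' i r) (as (e i r))) →
    action (O.comp o p) as = action o (fun i => action (p i) (as' i))
  action_act : ∀ {cs : List C} {t : C} (σ : Equiv.Perm (Fin cs.length)) (o : O.Op cs t)
    (as : ∀ j : Fin (List.ofFn (fun i => cs.get (σ i))).length,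
      X ((List.ofFn (fun i => cs.get (σ i))).get j))
    (e : Fin cs.length → Fin (List.ofFn (fun i => cs.get (σ i))).length)
    (_ : ∀ i, ((e i : ℕ)) = ((σ.symm i : ℕ)))
    (as' : ∀ i : Fin cs.length, X (cs.get i)),
    (∀ i, HEq (as' i) (as (e i))) →
    action (O.act σ o) as = action o as'

/-- Morphisms of algebras over a colored operad. -/
@[ext]
structure AlgebraHom {C : Type u} {O : Operad C} (A B : Algebra O) : Type u where
  app : ∀ c : C, A.X c → B.X c
  naturality : ∀ {cs : List C} {t : C} (o : O.Op cs t)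
    (as : ∀ i : Fin cs.length, A.X (cs.get i)),
    app t (A.action o as) = B.action o (fun i => app _ (as i))

instance {C : Type u} (O : Operad C) : Category (Algebra O) where
  Hom A B := AlgebraHom A B
  id A := ⟨fun _ a => a, fun _ _ => rfl⟩
  comp f g := ⟨fun c a => g.app c (f.app c a), by
    intro cs t o as
    show g.app t (f.app t _) = _
    rw [f.naturality, g.naturality]⟩
  id_comp f := rfl
  comp_id f := rfl
  assoc f g h := rfl

/-! ### Orthogonal categories and field theories -/

/-- An orthogonality relation on a category `C`: a symmetric relation on pairs
of morphisms with common target, closed under pre- and post-composition. -/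
structure OrthRel (C : Type u) [Category.{v} C] where
  rel : ∀ {c₁ c₂ t : C}, (c₁ ⟶ t) → (c₂ ⟶ t) → Prop
  symm : ∀ {c₁ c₂ t : C} {f₁ : c₁ ⟶ t} {f₂ : c₂ ⟶ t}, rel f₁ f₂ → rel f₂ f₁
  precomp : ∀ {c₁ c₁' c₂ t : C} (g : c₁' ⟶ c₁) {f₁ : c₁ ⟶ t} {f₂ : c₂ ⟶ t},
    rel f₁ f₂ → rel (g ≫ f₁) f₂
  postcomp : ∀ {c₁ c₂ t t' : C} (h : t ⟶ t') {f₁ : c₁ ⟶ t} {f₂ : c₂ ⟶ t},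
    rel f₁ f₂ → rel (f₁ ≫ h) (f₂ ≫ h)

/-- Einstein causality for a functor `F : C ⥤ Alg(P)` with respect to an
orthogonality relation `⊥` and two chosen arity-2 operations `r₁, r₂` of the
uncolored operad `P`: for `f₁ ⊥ f₂`, the images of `F(c₁)` and `F(c₂)`
"`r`-commute" in `F(t)`. -/
def IsCausal {C : Type u} [Category.{v} C] (orth : OrthRel C) {P : Operad.{u} PUnit}
    (r₁ r₂ : P.Op [PUnit.unit, PUnit.unit] PUnit.unit) (F : C ⥤ Algebra P) : Prop :=
  ∀ {c₁ c₂ t : C} (f₁ : c₁ ⟶ t) (f₂ : c₂ ⟶ t), orth.rel f₁ f₂ →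
    ∀ (x : (F.obj c₁).X PUnit.unit) (y : (F.obj c₂).X PUnit.unit),
      (F.obj t).action r₁
        (pairFam (P := (F.obj t).X) ((F.map f₁).app _ x) ((F.map f₂).app _ y)) =
      (F.obj t).action r₂
        (pairFam (P := (F.obj t).X) ((F.map f₁).app _ x) ((F.map f₂).app _ y))

/-- The category of field theories of type `(P, r₁, r₂)` on the orthogonal
category `(C, ⊥)`: functors `C ⥤ Alg(P)` satisfying Einstein causality. -/
abbrev FT (C : Type u) [Category.{v} C] (orth : OrthRel C) {P : Operad.{u} PUnit}
    (r₁ r₂ : P.Op [PUnit.unit, PUnit.unit] PUnit.unit) :=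
  ObjectProperty.FullSubcategory (IsCausal orth r₁ r₂)

/-- Pullback of field theories along an orthogonality-preserving functor. -/
def restrictFT {C : Type u} [Category.{v} C] {D : Type u} [Category.{v} D]
    {oC : OrthRel C} {oD : OrthRel D} {P : Operad.{u} PUnit}
    (r₁ r₂ : P.Op [PUnit.unit, PUnit.unit] PUnit.unit) (j : C ⥤ D)
    (horth : ∀ {c₁ c₂ t : C} (f₁ : c₁ ⟶ t) (f₂ : c₂ ⟶ t),
      oC.rel f₁ f₂ → oD.rel (j.map f₁) (j.map f₂)) :
    FT D oD r₁ r₂ ⥤ FT C oC r₁ r₂ :=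
  ObjectProperty.lift _
    (ObjectProperty.ι _ ⋙ (Functor.whiskeringLeft C D (Algebra P)).obj j)
    (fun A => by
      intro c₁ c₂ t f₁ f₂ hf x y
      exact A.property (j.map f₁) (j.map f₂) (horth f₁ f₂ hf) x y)

/-- The push-forward orthogonality relation `L_*(⊥)` on the localization
`C[W⁻¹]`: the orthogonality relation generated by the pairs
`(L(f₁), L(f₂))` for `f₁ ⊥ f₂`. -/
inductive locOrth {C : Type u} [SmallCategory C] (W : CategoryTheory.MorphismProperty C)
    (orth : OrthRel C) :
    ∀ {a b t : W.Localization}, (a ⟶ t) → (b ⟶ t) → Prop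
  | base {c₁ c₂ t : C} (f₁ : c₁ ⟶ t) (f₂ : c₂ ⟶ t) :
      orth.rel f₁ f₂ → locOrth W orth (W.Q.map f₁) (W.Q.map f₂)
  | symm {c₁ c₂ t : W.Localization} {f₁ : c₁ ⟶ t} {f₂ : c₂ ⟶ t} :
      locOrth W orth f₁ f₂ → locOrth W orth f₂ f₁
  | precomp {c₁ c₁' c₂ t : W.Localization} (g : c₁' ⟶ c₁) {f₁ : c₁ ⟶ t} {f₂ : c₂ ⟶ t} :
      locOrth W orth f₁ f₂ → locOrth W orth (g ≫ f₁) f₂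
  | postcomp {c₁ c₂ t t' : W.Localization} (h : t ⟶ t') {f₁ : c₁ ⟶ t} {f₂ : c₂ ⟶ t} :
      locOrth W orth f₁ f₂ → locOrth W orth (f₁ ≫ h) (f₂ ≫ h)

/-- The orthogonal localization `C̄[W⁻¹] = (C[W⁻¹], L_*(⊥))`. -/
def locOrthRel {C : Type u} [SmallCategory C] (W : CategoryTheory.MorphismProperty C)
    (orth : OrthRel C) : OrthRel W.Localization where
  rel := locOrth W orth
  symm := locOrth.symm
  precomp := locOrth.precomp
  postcomp := locOrth.postcomp
/-! ### Limits in the category of algebras -/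

section Limits

open Limits

variable {P : Operad.{u} PUnit}

/-- The underlying type of the limit of a diagram of algebras: compatible families. -/
def LimCarrier {J : Type u} [Category.{u} J] (K : J ⥤ Algebra P) : Type u :=
  { s : ∀ j, (K.obj j).X PUnit.unit //
    ∀ {j j' : J} (φ : j ⟶ j'), (K.map φ).app PUnit.unit (s j) = s j' }

/-- The limit algebra of a diagram of algebras, computed pointwise. -/
def limAlg {J : Type u} [Category.{u} J] (K : J ⥤ Algebra P) : Algebra P where
  X _ := LimCarrier K
  action o as := ⟨fun j => (K.obj j).action o (fun i => (as i).1 j), by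
    intro j j' φ
    rw [(K.map φ).naturality]
    congr 1
    funext i
    exact (as i).2 φ⟩
  action_unit a := by
    apply Subtype.ext
    funext j
    exact (K.obj j).action_unit _
  action_comp {cs t} o {bs} p as e he as' h := by
    apply Subtype.ext
    funext j
    exact (K.obj j).action_comp o p (fun k => (as k).1 j) e he (fun i r => (as' i r).1 j)
      (fun i r => heq_of_eq (congrFun (congrArg Subtype.val (eq_of_heq (h i r))) j))
  action_act {cs t} σ o as e he as' h := by
    apply Subtype.ext
    funext j
    exact (K.obj j).action_act σ o (fun k => (as k).1 j) e he (fun i => (as' i).1 j)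
      (fun i => heq_of_eq (congrFun (congrArg Subtype.val (eq_of_heq (h i))) j))

/-- The limit cone over a diagram of algebras. -/
def limConeAlg {J : Type u} [Category.{u} J] (K : J ⥤ Algebra P) : Cone K where
  pt := limAlg K
  π :=
    { app := fun j => ⟨fun _ s => s.1 j, fun _ _ => rfl⟩
      naturality := fun j j' φ => by
        apply AlgebraHom.ext
        funext c s
        exact (s.2 φ).symm }

/-- The cone `limConeAlg` is a limit cone. -/
def limConeAlgIsLimit {J : Type u} [Category.{u} J] (K : J ⥤ Algebra P) :
    IsLimit (limConeAlg K) where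
  lift c :=
    { app := fun co x => ⟨fun j => (c.π.app j).app co x, by
        intro j j' φ
        exact (congrArg (fun (q : AlgebraHom _ _) => q.app co x) (c.w φ))⟩
      naturality := fun o as => by
        apply Subtype.ext
        funext j
        exact (c.π.app j).naturality o as }
  fac c j := rfl
  uniq c m hm := by
    apply AlgebraHom.ext
    funext co x
    apply Subtype.ext
    funext j
    exact congrArg (fun (q : AlgebraHom _ _) => q.app co x) (hm j)

instance : HasLimitsOfSize.{u, u} (Algebra P) :=
  ⟨fun _ _ => ⟨fun K => HasLimit.mk ⟨limConeAlg K, limConeAlgIsLimit K⟩⟩⟩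

end Limits
/-! ### Causality is closed under limits -/

section Causal

open Limits

variable {P : Operad.{u} PUnit}

/-- Applying an algebra morphism to a `pairFam` family. -/
lemma app_pairFam {A B : Algebra P} (f : AlgebraHom A B)
    (x y : A.X PUnit.unit) :
    (fun i => f.app _ (pairFam (P := A.X) x y i)) =
      pairFam (P := B.X) (f.app _ x) (f.app _ y) := by
  funext i
  match i with
  | ⟨0, _⟩ => rfl
  | ⟨1, _⟩ => rfl
  | ⟨n + 2, h⟩ => exact absurd h (by simp)

/-- Causality is invariant under isomorphism of functors. -/
lemma isCausal_of_iso {C' : Type u} [Category.{u} C'] (orth' : OrthRel C')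
    {r₁ r₂ : P.Op [PUnit.unit, PUnit.unit] PUnit.unit}
    {F₁ F₂ : C' ⥤ Algebra P} (e : F₁ ≅ F₂) (hF : IsCausal orth' r₁ r₂ F₁) :
    IsCausal orth' r₁ r₂ F₂ := by
  intro c₁ c₂ t f₁ f₂ hrel x y
  set u := (e.inv.app c₁).app PUnit.unit x with hu
  set v := (e.inv.app c₂).app PUnit.unit y with hv
  have hx : (e.hom.app c₁).app PUnit.unit u = x := by
    rw [hu]
    exact congrArg (fun (q : AlgebraHom _ _) => q.app PUnit.unit x) (e.inv_hom_id_app c₁)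
  have hy : (e.hom.app c₂).app PUnit.unit v = y := by
    rw [hv]
    exact congrArg (fun (q : AlgebraHom _ _) => q.app PUnit.unit y) (e.inv_hom_id_app c₂)
  have hnat : ∀ {c : C'} (f : c ⟶ t) (w : (F₁.obj c).X PUnit.unit),
      (F₂.map f).app PUnit.unit ((e.hom.app c).app PUnit.unit w) =
        (e.hom.app t).app PUnit.unit ((F₁.map f).app PUnit.unit w) := by
    intro c f w
    exact (congrArg (fun (q : AlgebraHom _ _) => q.app PUnit.unit w) (e.hom.naturality f)).symm
  rw [← hx, ← hy, hnat f₁ u, hnat f₂ v,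
    ← app_pairFam (e.hom.app t) ((F₁.map f₁).app PUnit.unit u) ((F₁.map f₂).app PUnit.unit v),
    ← (e.hom.app t).naturality r₁ _, ← (e.hom.app t).naturality r₂ _]
  exact congrArg _ (hF f₁ f₂ hrel u v)

variable {LC : Type u} [Category.{u} LC] {J : Type u} [Category.{u} J]

/-- The pointwise limit of a diagram of functors into algebras. -/
def limFunctor (K : J ⥤ (LC ⥤ Algebra P)) : LC ⥤ Algebra P where
  obj d := limAlg (K ⋙ (evaluation LC (Algebra P)).obj d)
  map {d d'} g :=
    { app := fun _ s => ⟨fun j => ((K.obj j).map g).app PUnit.unit (s.1 j), by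
        intro j j' φ
        have h1 : ((K.map φ).app d').app PUnit.unit (((K.obj j).map g).app PUnit.unit (s.1 j)) =
            ((K.obj j').map g).app PUnit.unit (((K.map φ).app d).app PUnit.unit (s.1 j)) :=
          congrArg (fun (q : AlgebraHom _ _) => q.app PUnit.unit (s.1 j))
            ((K.map φ).naturality g)
        exact h1.trans (congrArg (((K.obj j').map g).app PUnit.unit) (s.2 φ))⟩
      naturality := fun o as => by
        apply Subtype.ext
        funext j
        exact ((K.obj j).map g).naturality o _ }
  map_id d := by
    apply AlgebraHom.ext
    funext c s
    apply Subtype.ext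
    funext j
    exact congrArg (fun (q : AlgebraHom _ _) => q.app PUnit.unit (s.1 j)) ((K.obj j).map_id d)
  map_comp {d d' d''} g g' := by
    apply AlgebraHom.ext
    funext c s
    apply Subtype.ext
    funext j
    exact congrArg (fun (q : AlgebraHom _ _) => q.app PUnit.unit (s.1 j))
      ((K.obj j).map_comp g g')

/-- The limit cone on `limFunctor`. -/
def limFunctorCone (K : J ⥤ (LC ⥤ Algebra P)) : Cone K where
  pt := limFunctor K
  π :=
    { app := fun j =>
        { app := fun d => ⟨fun _ s => s.1 j, fun _ _ => rfl⟩
          naturality := fun d d' g => by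
            apply AlgebraHom.ext
            funext c s
            rfl }
      naturality := fun j j' φ => by
        apply NatTrans.ext
        funext d
        apply AlgebraHom.ext
        funext c s
        exact (s.2 φ).symm }

/-- `limFunctorCone` is a limit cone. -/
def limFunctorConeIsLimit (K : J ⥤ (LC ⥤ Algebra P)) : IsLimit (limFunctorCone K) where
  lift c :=
    { app := fun d =>
        { app := fun co x => ⟨fun j => ((c.π.app j).app d).app co x, by
            intro j j' φ
            exact congrArg (fun (q : AlgebraHom _ _) => q.app co x)
              (congrArg (fun (q : NatTrans _ _) => q.app d) (c.w φ))⟩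
          naturality := fun o as => by
            apply Subtype.ext
            funext j
            exact ((c.π.app j).app d).naturality o as }
      naturality := fun d d' g => by
        apply AlgebraHom.ext
        funext co x
        apply Subtype.ext
        funext j
        exact congrArg (fun (q : AlgebraHom _ _) => q.app co x) ((c.π.app j).naturality g) }
  fac c j := rfl
  uniq c m hm := by
    apply NatTrans.ext
    funext d
    apply AlgebraHom.ext
    funext co x
    apply Subtype.ext
    funext j
    exact congrArg (fun (q : AlgebraHom _ _) => q.app co x)
      (congrArg (fun (q : NatTrans _ _) => q.app d) (hm j))

/-- The pointwise limit of causal functors is causal. -/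
lemma isCausal_limFunctor (orth' : OrthRel LC)
    {r₁ r₂ : P.Op [PUnit.unit, PUnit.unit] PUnit.unit}
    (K : J ⥤ (LC ⥤ Algebra P)) (hK : ∀ j, IsCausal orth' r₁ r₂ (K.obj j)) :
    IsCausal orth' r₁ r₂ (limFunctor K) := by
  intro c₁ c₂ t f₁ f₂ hrel x y
  apply Subtype.ext
  funext j
  have hcomp : ∀ (r : P.Op [PUnit.unit, PUnit.unit] PUnit.unit),
      (((limFunctor K).obj t).action r
        (pairFam (P := ((limFunctor K).obj t).X)
          (((limFunctor K).map f₁).app _ x) (((limFunctor K).map f₂).app _ y))).1 j =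
      ((K.obj j).obj t).action r
        (pairFam (P := ((K.obj j).obj t).X)
          (((K.obj j).map f₁).app _ (x.1 j)) (((K.obj j).map f₂).app _ (y.1 j))) := by
    intro r
    show ((K.obj j).obj t).action r _ = _
    congr 1
    funext i
    match i with
    | ⟨0, _⟩ => rfl
    | ⟨1, _⟩ => rfl
    | ⟨n + 2, h⟩ => exact absurd h (by simp)
  rw [hcomp r₁, hcomp r₂]
  exact hK j f₁ f₂ hrel (x.1 j) (y.1 j)

/-- Causality is closed under limits in the functor category. -/
lemma closedUnderLimits_isCausal (orth' : OrthRel LC)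
    (r₁ r₂ : P.Op [PUnit.unit, PUnit.unit] PUnit.unit) :
    ObjectProperty.IsClosedUnderLimitsOfShape (IsCausal orth' r₁ r₂ (C := LC) (P := P)) J := by
  constructor
  rintro X ⟨p⟩
  have e : limFunctor p.diag ≅ X :=
    (limFunctorConeIsLimit p.diag).conePointUniqueUpToIso p.isLimit
  exact fun {c₁ c₂ t} f₁ f₂ hr x y =>
    isCausal_of_iso orth' e (isCausal_limFunctor orth' p.diag p.prop_diag_obj) f₁ f₂ hr x y

instance (orth' : OrthRel LC) (r₁ r₂ : P.Op [PUnit.unit, PUnit.unit] PUnit.unit) :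
    HasLimits (FT LC orth' r₁ r₂) :=
  ⟨fun J _ => have := closedUnderLimits_isCausal (J := J) orth' r₁ r₂; inferInstance⟩

end Causal
/-! ### Properties of the pullback functor along the localization -/

section Pullback

open Limits

variable {C : Type u} [SmallCategory C] (W : CategoryTheory.MorphismProperty C)
  (orth : OrthRel C) {P : Operad.{u} PUnit}
  (r₁ r₂ : P.Op [PUnit.unit, PUnit.unit] PUnit.unit)

/-- Abbreviation for the pullback functor `L*`. -/
noncomputable abbrev pullFT : FT W.Localization (locOrthRel W orth) r₁ r₂ ⥤ FT C orth r₁ r₂ :=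
  restrictFT (oC := orth) (oD := locOrthRel W orth) r₁ r₂ W.Q
    (fun f₁ f₂ h => locOrth.base f₁ f₂ h)

instance pullFT_faithful : (pullFT W orth r₁ r₂).Faithful := by
  have : (((Functor.whiskeringLeft C W.Localization (Algebra P)).obj W.Q)).Faithful :=
    Localization.faithful_whiskeringLeft W.Q W _
  exact ⟨fun {B₁ B₂ f g} h => InducedCategory.hom_ext
    (this.map_injective (F := (Functor.whiskeringLeft _ _ _).obj W.Q) (by have h' := congrArg (fun k => InducedCategory.Hom.hom k) h; exact h'))⟩

instance pullFT_full : (pullFT W orth r₁ r₂).Full := by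
  have : (((Functor.whiskeringLeft C W.Localization (Algebra P)).obj W.Q)).Full :=
    Localization.full_whiskeringLeft W.Q W _
  exact ⟨fun {B₁ B₂} τ => by
    obtain ⟨σ, hσ⟩ := this.map_surjective (F := (Functor.whiskeringLeft _ _ _).obj W.Q) τ.hom
    exact ⟨InducedCategory.homMk σ, InducedCategory.hom_ext hσ⟩⟩

instance pullFT_preservesLimits : PreservesLimits (pullFT W orth r₁ r₂) := by
  letI : CreatesLimits
      (ObjectProperty.ι (IsCausal (locOrthRel W orth) r₁ r₂ (P := P))) :=
    ⟨fun {J} _ => have := closedUnderLimits_isCausal (J := J) (locOrthRel W orth) r₁ r₂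
      inferInstance⟩
  have h1 : PreservesLimits
      (ObjectProperty.ι (IsCausal (locOrthRel W orth) r₁ r₂ (P := P)) ⋙
        (Functor.whiskeringLeft C W.Localization (Algebra P)).obj W.Q) :=
    inferInstance
  have h2 : PreservesLimits
      (pullFT W orth r₁ r₂ ⋙ ObjectProperty.ι (IsCausal orth r₁ r₂ (P := P))) := h1
  exact preservesLimits_of_reflects_of_preserves (pullFT W orth r₁ r₂)
    (ObjectProperty.ι (IsCausal orth r₁ r₂ (P := P)))

end Pullback
/-! ### The solution set condition -/

section SolutionSet

open Limits

variable {C : Type u} [SmallCategory C] {W : CategoryTheory.MorphismProperty C}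
  {P : Operad.{u} PUnit}

/-- Formal terms: trees built from elements of `A`, operadic operations and
morphisms of the localization. -/
inductive Tr (W : CategoryTheory.MorphismProperty C) (A : C ⥤ Algebra P) :
    W.Localization → Type u
  | base (c : C) (x : (A.obj c).X PUnit.unit) : Tr W A (W.Q.obj c)
  | ops {d : W.Localization} (cs : List PUnit.{u + 1}) (o : P.Op cs PUnit.unit)
      (ts : Fin cs.length → Tr W A d) : Tr W A d
  | map {d d' : W.Localization} (g : d ⟶ d') (t : Tr W A d) : Tr W A d'

variable {A : C ⥤ Algebra P}

/-- Evaluation of a formal term in a theory `B` on the localization equipped with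
a map `h : A ⟶ W.Q ⋙ B`. -/
def evTr (B : W.Localization ⥤ Algebra P) (h : A ⟶ W.Q ⋙ B) :
    ∀ {d : W.Localization}, Tr W A d → (B.obj d).X PUnit.unit
  | _, .base c x => (h.app c).app PUnit.unit x
  | _, .ops _ o ts => (B.obj _).action o (fun i => evTr B h (ts i))
  | _, .map g t => (B.map g).app PUnit.unit (evTr B h t)

/-- The kernel relation of evaluation. -/
def kerTr (B : W.Localization ⥤ Algebra P) (h : A ⟶ W.Q ⋙ B) :
    ∀ d : W.Localization, Tr W A d → Tr W A d → Prop :=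
  fun _ t t' => evTr B h t = evTr B h t'

variable (orth : OrthRel C) (r₁ r₂ : P.Op [PUnit.unit, PUnit.unit] PUnit.unit)

/-- A relation is *good* if it arises as the kernel of evaluation into some
field theory on the localization. -/
def GoodRel (A : C ⥤ Algebra P) (r : ∀ d : W.Localization, Tr W A d → Tr W A d → Prop) : Prop :=
  ∃ (B : FT W.Localization (locOrthRel W orth) r₁ r₂) (h : A ⟶ W.Q ⋙ B.obj),
    r = kerTr B.obj h

variable {r : ∀ d : W.Localization, Tr W A d → Tr W A d → Prop}

/-- The setoid of formal terms induced by a good relation. -/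
abbrev trSetoid (hg : GoodRel orth r₁ r₂ A r) (d : W.Localization) : Setoid (Tr W A d) where
  r := r d
  iseqv := by
    obtain ⟨B, h, rfl⟩ := hg
    exact ⟨fun _ => rfl, Eq.symm, Eq.trans⟩

end SolutionSet
section QuotTheory

open Limits

variable {C : Type u} [SmallCategory C] {W : CategoryTheory.MorphismProperty C}
  {P : Operad.{u} PUnit} {A : C ⥤ Algebra P}
  {orth : OrthRel C} {r₁ r₂ : P.Op [PUnit.unit, PUnit.unit] PUnit.unit}
  {r : ∀ d : W.Localization, Tr W A d → Tr W A d → Prop}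

/-- Carrier of the quotient theory. -/
abbrev TQ (hg : GoodRel orth r₁ r₂ A r) (d : W.Localization) : Type u :=
  _root_.Quotient (trSetoid orth r₁ r₂ hg d)

variable (hg : GoodRel orth r₁ r₂ A r)

/-- The chosen witness theory. -/
noncomputable def witB (hg : GoodRel orth r₁ r₂ A r) :
    FT W.Localization (locOrthRel W orth) r₁ r₂ := hg.choose

/-- The chosen witness map. -/
noncomputable def witH (hg : GoodRel orth r₁ r₂ A r) : A ⟶ W.Q ⋙ (witB hg).obj :=
  hg.choose_spec.choose

lemma witSpec (hg : GoodRel orth r₁ r₂ A r) : r = kerTr (witB hg).obj (witH hg) :=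
  hg.choose_spec.choose_spec

/-- Embedding of the quotient carrier into the witness theory. -/
noncomputable def embT {d : W.Localization} (x : TQ hg d) :
    ((witB hg).obj.obj d).X PUnit.unit :=
  evTr (witB hg).obj (witH hg) x.out

lemma embT_mk {d : W.Localization} (t : Tr W A d) :
    embT hg (Quotient.mk (trSetoid orth r₁ r₂ hg _) t) = evTr (witB hg).obj (witH hg) t := by
  have h1 : r d (Quotient.mk (trSetoid orth r₁ r₂ hg d) t).out t :=
    @Quotient.mk_out _ (trSetoid orth r₁ r₂ hg d) t
  exact cast (congrFun (congrFun (congrFun (witSpec hg) d) _) t) h1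

lemma embT_inj {d : W.Localization} {x y : TQ hg d} (h : embT hg x = embT hg y) : x = y := by
  have h1 : r d x.out y.out :=
    cast (congrFun (congrFun (congrFun (witSpec hg) d) x.out) y.out).symm h
  rw [← Quotient.out_eq x, ← Quotient.out_eq y]
  exact Quotient.sound h1

/-- The algebra structure on the quotient carrier. -/
noncomputable def TAlg (d : W.Localization) : Algebra P where
  X _ := TQ hg d
  action {cs t} o as := Quotient.mk (trSetoid orth r₁ r₂ hg _) (Tr.ops cs o (fun i => (as i).out))
  action_unit {c} a := by
    apply embT_inj hg
    rw [embT_mk]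
    show ((witB hg).obj.obj _).action (P.unit c) (fun i => embT hg (a i)) = _
    exact ((witB hg).obj.obj _).action_unit (fun i => embT hg (a i))
  action_comp {cs t} o {bs} p as e he as' h := by
    apply embT_inj hg
    rw [embT_mk, embT_mk]
    show ((witB hg).obj.obj _).action (P.comp o p) (fun i => embT hg (as i)) =
      ((witB hg).obj.obj _).action o (fun i => embT hg _)
    have step : ∀ i, embT hg (Quotient.mk (trSetoid orth r₁ r₂ hg _) (Tr.ops (bs i) (p i) (fun r' => (as' i r').out))) =
        ((witB hg).obj.obj _).action (p i) (fun r' => embT hg (as' i r')) := fun i =>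
      embT_mk hg _
    rw [show (fun i => embT hg (Quotient.mk (trSetoid orth r₁ r₂ hg _) (Tr.ops (bs i) (p i) (fun r' => (as' i r').out)))) =
        (fun i => ((witB hg).obj.obj _).action (p i) (fun r' => embT hg (as' i r'))) from
      funext step]
    exact ((witB hg).obj.obj _).action_comp o p (fun i => embT hg (as i)) e he
      (fun i r' => embT hg (as' i r'))
      (fun i r' => heq_of_eq (congrArg (embT hg) (eq_of_heq (h i r'))))
  action_act {cs t} σ o as e he as' h := by
    apply embT_inj hg
    rw [embT_mk, embT_mk]
    show ((witB hg).obj.obj _).action (P.act σ o) (fun i => embT hg (as i)) =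
      ((witB hg).obj.obj _).action o (fun i => embT hg (as' i))
    exact ((witB hg).obj.obj _).action_act σ o (fun i => embT hg (as i)) e he
      (fun i => embT hg (as' i))
      (fun i => heq_of_eq (congrArg (embT hg) (eq_of_heq (h i))))

lemma embT_action {d : W.Localization} {cs : List PUnit.{u + 1}} (o : P.Op cs PUnit.unit)
    (as : Fin cs.length → TQ hg d) :
    embT hg ((TAlg hg d).action o as) =
      ((witB hg).obj.obj d).action o (fun i => embT hg (as i)) :=
  embT_mk hg _

end QuotTheory
section QuotFunctor

open Limits

variable {C : Type u} [SmallCategory C] {W : CategoryTheory.MorphismProperty C}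
  {P : Operad.{u} PUnit} {A : C ⥤ Algebra P}
  {orth : OrthRel C} {r₁ r₂ : P.Op [PUnit.unit, PUnit.unit] PUnit.unit}
  {r : ∀ d : W.Localization, Tr W A d → Tr W A d → Prop}

variable (hg : GoodRel orth r₁ r₂ A r)

lemma embT_mapTr {d d' : W.Localization} (g : d ⟶ d') (x : TQ hg d) :
    embT hg (Quotient.mk (trSetoid orth r₁ r₂ hg d') (Tr.map g x.out)) =
      ((witB hg).obj.map g).app PUnit.unit (embT hg x) :=
  embT_mk hg _

/-- The quotient theory as a functor on the localization. -/
noncomputable def TF : W.Localization ⥤ Algebra P where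
  obj d := TAlg hg d
  map {d d'} g :=
    { app := fun _ x => Quotient.mk (trSetoid orth r₁ r₂ hg d') (Tr.map g x.out)
      naturality := fun {cs t} o as => by
        apply embT_inj hg
        erw [embT_mapTr hg g, embT_action hg]
        have h1 := ((witB hg).obj.map g).naturality o (fun i => embT hg (as i))
        rw [h1]
        rw [embT_action hg]
        congr 1
        funext i
        exact (embT_mapTr hg g (as i)).symm }
  map_id d := by
    apply AlgebraHom.ext
    funext c x
    apply embT_inj hg
    erw [embT_mapTr hg]
    have h1 := congrArg (fun (q : AlgebraHom _ _) => q.app PUnit.unit (embT hg x))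
      ((witB hg).obj.map_id d)
    exact h1
  map_comp {d d' d''} g g' := by
    apply AlgebraHom.ext
    funext c x
    apply embT_inj hg
    erw [embT_mapTr hg]
    have h1 := congrArg (fun (q : AlgebraHom _ _) => q.app PUnit.unit (embT hg x))
      ((witB hg).obj.map_comp g g')
    refine h1.trans ?_
    show ((witB hg).obj.map g').app PUnit.unit (((witB hg).obj.map g).app PUnit.unit (embT hg x)) =
      _
    rw [← embT_mapTr hg g x, ← embT_mapTr hg g']
    rfl

lemma embT_pairFam {d : W.Localization} (x y : TQ hg d) :
    (fun i => embT hg (pairFam (P := (TAlg hg d).X) x y i)) =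
      pairFam (P := ((witB hg).obj.obj d).X) (embT hg x) (embT hg y) := by
  funext i
  match i with
  | ⟨0, _⟩ => rfl
  | ⟨1, _⟩ => rfl
  | ⟨n + 2, h⟩ => exact absurd h (by simp)

lemma TF_causal : IsCausal (locOrthRel W orth) r₁ r₂ (TF hg) := by
  intro c₁ c₂ t f₁ f₂ hrel x y
  apply embT_inj hg
  have key : ∀ ρ : P.Op [PUnit.unit, PUnit.unit] PUnit.unit,
      embT hg ((TAlg hg t).action ρ
        (pairFam (P := (TAlg hg t).X)
          (Quotient.mk (trSetoid orth r₁ r₂ hg t) (Tr.map f₁ x.out))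
          (Quotient.mk (trSetoid orth r₁ r₂ hg t) (Tr.map f₂ y.out)))) =
      ((witB hg).obj.obj t).action ρ
        (pairFam (P := ((witB hg).obj.obj t).X)
          (((witB hg).obj.map f₁).app PUnit.unit (embT hg x))
          (((witB hg).obj.map f₂).app PUnit.unit (embT hg y))) := by
    intro ρ
    erw [embT_action hg, embT_pairFam hg, embT_mapTr hg f₁ x, embT_mapTr hg f₂ y]
  exact (key r₁).trans
    (((witB hg).property f₁ f₂ hrel (embT hg x) (embT hg y)).trans (key r₂).symm)

end QuotFunctor
section UnitMap

open Limits

variable {C : Type u} [SmallCategory C] {W : CategoryTheory.MorphismProperty C}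
  {P : Operad.{u} PUnit} {A : C ⥤ Algebra P}
  {orth : OrthRel C} {r₁ r₂ : P.Op [PUnit.unit, PUnit.unit] PUnit.unit}
  {r : ∀ d : W.Localization, Tr W A d → Tr W A d → Prop}

variable (hg : GoodRel orth r₁ r₂ A r)

lemma embT_base (c : C) (x : (A.obj c).X PUnit.unit) :
    embT hg (Quotient.mk (trSetoid orth r₁ r₂ hg (W.Q.obj c)) (Tr.base c x)) =
      ((witH hg).app c).app PUnit.unit x :=
  embT_mk hg _

/-- The unit morphism `A ⟶ L* (L_! A)`. -/
noncomputable def etaT : A ⟶ W.Q ⋙ TF hg where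
  app c :=
    { app := fun _ x => Quotient.mk (trSetoid orth r₁ r₂ hg (W.Q.obj c)) (Tr.base c x)
      naturality := fun {cs t} o as => by
        apply embT_inj hg
        show embT hg (Quotient.mk (trSetoid orth r₁ r₂ hg (W.Q.obj c))
            (Tr.base c ((A.obj c).action o as))) =
          embT hg ((TAlg hg (W.Q.obj c)).action o
            (fun i => Quotient.mk (trSetoid orth r₁ r₂ hg (W.Q.obj c)) (Tr.base c (as i))))
        rw [embT_base hg, embT_action hg, ((witH hg).app c).naturality o as]
        congr 1
        funext i
        exact (embT_base hg c (as i)).symm }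
  naturality {c c'} f := by
    apply AlgebraHom.ext
    funext co x
    apply embT_inj hg
    have h1 : embT hg (Quotient.mk (trSetoid orth r₁ r₂ hg (W.Q.obj c'))
        (Tr.base c' ((A.map f).app PUnit.unit x))) =
        ((witH hg).app c').app PUnit.unit ((A.map f).app PUnit.unit x) := embT_base hg _ _
    have h2 : ((witH hg).app c').app PUnit.unit ((A.map f).app PUnit.unit x) =
        ((witB hg).obj.map (W.Q.map f)).app PUnit.unit (((witH hg).app c).app PUnit.unit x) :=
      congrArg (fun (q : AlgebraHom _ _) => q.app PUnit.unit x) ((witH hg).naturality f)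
    show embT hg (Quotient.mk (trSetoid orth r₁ r₂ hg (W.Q.obj c'))
        (Tr.base c' ((A.map f).app PUnit.unit x))) =
      embT hg (Quotient.mk (trSetoid orth r₁ r₂ hg (W.Q.obj c'))
        (Tr.map (W.Q.map f)
          (Quotient.mk (trSetoid orth r₁ r₂ hg (W.Q.obj c)) (Tr.base c x)).out))
    rw [h1, embT_mapTr hg (W.Q.map f), embT_base hg c x, h2]

end UnitMap

section Factorization

open Limits

variable {C : Type u} [SmallCategory C] {W : CategoryTheory.MorphismProperty C}
  {P : Operad.{u} PUnit} {A : C ⥤ Algebra P}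
  {orth : OrthRel C} {r₁ r₂ : P.Op [PUnit.unit, PUnit.unit] PUnit.unit}

variable (orth r₁ r₂) in
/-- The kernel of evaluation into a field theory is good. -/
lemma kerGood (X : FT W.Localization (locOrthRel W orth) r₁ r₂) (h : A ⟶ W.Q ⋙ X.obj) :
    GoodRel orth r₁ r₂ A (kerTr X.obj h) := ⟨X, h, rfl⟩

variable (X : FT W.Localization (locOrthRel W orth) r₁ r₂) (h : A ⟶ W.Q ⋙ X.obj)

lemma evTr_out_mk {d : W.Localization} (t : Tr W A d) :
    evTr X.obj h (Quotient.mk (trSetoid orth r₁ r₂ (kerGood orth r₁ r₂ X h) d) t).out =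
      evTr X.obj h t :=
  @Quotient.mk_out _ (trSetoid orth r₁ r₂ (kerGood orth r₁ r₂ X h) d) t

/-- The comparison morphism from the quotient theory to `X`. -/
noncomputable def compareHom : TF (kerGood orth r₁ r₂ X h) ⟶ X.obj where
  app d :=
    { app := fun _ x => evTr X.obj h x.out
      naturality := fun {cs t} o as => by
        show evTr X.obj h (Quotient.mk _ (Tr.ops cs o (fun i => (as i).out))).out = _
        rw [evTr_out_mk]
        rfl }
  naturality {d d'} g := by
    apply AlgebraHom.ext
    funext co x
    show evTr X.obj h (Quotient.mk _ (Tr.map g x.out)).out = _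
    rw [evTr_out_mk]
    rfl

end Factorization

section SolutionSetProof

open Limits

variable {C : Type u} [SmallCategory C] (W : CategoryTheory.MorphismProperty C)
  (orth : OrthRel C) {P : Operad.{u} PUnit}
  (r₁ r₂ : P.Op [PUnit.unit, PUnit.unit] PUnit.unit)

lemma pullFT_solutionSet : SolutionSetCondition.{u} (pullFT W orth r₁ r₂) := by
  intro A
  refine ⟨{ rr : ∀ d : W.Localization, Tr W A.obj d → Tr W A.obj d → Prop //
      GoodRel orth r₁ r₂ A.obj rr },
    fun i => ⟨TF i.2, TF_causal i.2⟩, fun i => InducedCategory.homMk (etaT i.2), ?_⟩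
  intro X h
  refine ⟨⟨kerTr X.obj h.hom, kerGood orth r₁ r₂ X h.hom⟩, InducedCategory.homMk (compareHom X h.hom), ?_⟩
  apply InducedCategory.hom_ext
  apply NatTrans.ext
  funext c
  apply AlgebraHom.ext
  funext co x
  show evTr X.obj h.hom (Quotient.mk _ (Tr.base c x)).out = (h.hom.app c).app co x
  erw [evTr_out_mk]
  rfl

end SolutionSetProof

/-- If `L : C̄ → C̄[W⁻¹]` is an orthogonal localization, then
the pullback functor `L* : FT(C̄[W⁻¹],P,rᵢ) → FT(C̄,P,rᵢ)` is fully faithful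
and has a left adjoint `L_!` whose counit `L_! L* A → A` is a natural
isomorphism; i.e. it exhibits `FT(C̄[W⁻¹],P,rᵢ)` as a full reflective
subcategory of `FT(C̄,P,rᵢ)`. -/
theorem localization_reflective
    (C : Type u) [SmallCategory C] (W : CategoryTheory.MorphismProperty C)
    (orth : OrthRel C) (P : Operad.{u} PUnit)
    (r₁ r₂ : P.Op [PUnit.unit, PUnit.unit] PUnit.unit) :
    (restrictFT (oC := orth) (oD := locOrthRel W orth) r₁ r₂ W.Q
        (fun f₁ f₂ h => locOrth.base f₁ f₂ h)).Full ∧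
    (restrictFT (oC := orth) (oD := locOrthRel W orth) r₁ r₂ W.Q
        (fun f₁ f₂ h => locOrth.base f₁ f₂ h)).Faithful ∧
    ∃ (Lshriek : FT C orth r₁ r₂ ⥤ FT W.Localization (locOrthRel W orth) r₁ r₂)
      (adj : Lshriek ⊣ restrictFT (oC := orth) (oD := locOrthRel W orth) r₁ r₂ W.Q
        (fun f₁ f₂ h => locOrth.base f₁ f₂ h)),
      IsIso adj.counit := by
  haveI : (pullFT W orth r₁ r₂).IsRightAdjoint :=
    isRightAdjoint_of_preservesLimits_of_solutionSetCondition _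
      (pullFT_solutionSet W orth r₁ r₂)
  exact ⟨pullFT_full W orth r₁ r₂, pullFT_faithful W orth r₁ r₂,
    (pullFT W orth r₁ r₂).leftAdjoint, Adjunction.ofIsRightAdjoint _, inferInstance⟩

end AQFT
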